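/- arXiv:1411.7636 — 2 statements merged into one kernel-verified Lean document; each statement's English description precedes it below -/
import Mathlib

section
/- For every modal algebra (A, ◇), the relation R_A on the set of ultrafilters of A defined by x R_A y iff (for all a ∈ A, a ∈ y implies ◇a ∈ x) makes the map a ↦ {x : a ∈ x} a Boolean algebra embedding of A into the powerset algebra of ultrafilters that moreover commutes with the diamond operation, i.e., the image of ◇a equals ◇_{R_A} of the image of a. -/
/-- An ultrafilter of a Boolean algebra. -/
structure BAUltrafilter (A : Type*) [BooleanAlgebra A] where
  carrier : Set A
  top_mem : ⊤ ∈ carrier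
  bot_not_mem : ⊥ ∉ carrier
  mem_of_le : ∀ a b : A, a ∈ carrier → a ≤ b → b ∈ carrier
  inf_mem : ∀ a b : A, a ∈ carrier → b ∈ carrier → a ⊓ b ∈ carrier
  ultra : ∀ a : A, a ∈ carrier ∨ aᶜ ∈ carrier

namespace BAUltrafilterAux

variable {A : Type*} [BooleanAlgebra A]

lemma not_both (u : BAUltrafilter A) (a : A) :
    ¬(a ∈ u.carrier ∧ aᶜ ∈ u.carrier) := by
  rintro ⟨h1, h2⟩
  have := u.inf_mem _ _ h1 h2
  rw [inf_compl_eq_bot] at this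
  exact u.bot_not_mem this

lemma compl_mem_iff (u : BAUltrafilter A) (a : A) :
    aᶜ ∈ u.carrier ↔ a ∉ u.carrier := by
  constructor
  · intro h ha; exact not_both u a ⟨ha, h⟩
  · intro h; rcases u.ultra a with h' | h'
    · exact absurd h' h
    · exact h'

/-- Every proper filter extends to an ultrafilter. -/
lemma exists_ultrafilter_superset (s : Set A) (htop : ⊤ ∈ s) (hbot : ⊥ ∉ s)
    (hup : ∀ a b : A, a ∈ s → a ≤ b → b ∈ s)
    (hinf : ∀ a b : A, a ∈ s → b ∈ s → a ⊓ b ∈ s) :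
    ∃ u : BAUltrafilter A, s ⊆ u.carrier := by
  have hpf : Order.IsPFilter s := by
    refine Order.IsPFilter.of_def ⟨⊤, htop⟩ ?_ ?_
    · intro a ha b hb
      exact ⟨a ⊓ b, hinf a b ha hb, inf_le_left, inf_le_right⟩
    · intro x y hxy hx
      exact hup x y hx hxy
  set F : Order.PFilter A := hpf.toPFilter with hF
  have hmemF : ∀ a : A, a ∈ F ↔ a ∈ s := fun a => Iff.rfl
  have hdisj : Disjoint (F : Set A) ((Order.Ideal.principal (⊥ : A)) : Set A) := by
    rw [Set.disjoint_right]
    intro a ha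
    have ha' : a ∈ Order.Ideal.principal (⊥ : A) := ha
    rw [Order.Ideal.mem_principal, le_bot_iff] at ha'
    subst ha'
    exact fun h => hbot h
  obtain ⟨J, hJprime, _, hJdisj⟩ :=
    DistribLattice.prime_ideal_of_disjoint_filter_ideal hdisj
  have hproper : Order.Ideal.IsProper J := hJprime.toIsProper
  have htopJ : (⊤ : A) ∉ J := by
    intro h
    apply hproper.ne_univ
    ext a
    simp only [Set.mem_univ, iff_true, SetLike.mem_coe]
    exact J.lower le_top h
  refine ⟨⟨{a | a ∉ J}, htopJ, ?_, ?_, ?_, ?_⟩, ?_⟩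
  · simp only [Set.mem_setOf_eq, not_not]
    exact J.bot_mem
  · intro a b ha hab hb
    exact ha (J.lower hab hb)
  · intro a b ha hb hab
    rcases hJprime.mem_or_mem hab with h | h
    · exact ha h
    · exact hb h
  · intro a
    by_contra h
    push_neg at h
    obtain ⟨h1, h2⟩ := h
    simp only [Set.mem_setOf_eq, not_not] at h1 h2
    have : a ⊔ aᶜ ∈ J := J.sup_mem h1 h2
    rw [sup_compl_eq_top] at this
    exact htopJ this
  · intro a ha
    have haF : a ∈ F := (hmemF a).2 ha
    intro haJ
    exact (Set.disjoint_left.1 hJdisj) haF haJ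

lemma exists_ultrafilter_mem {a : A} (ha : a ≠ ⊥) :
    ∃ u : BAUltrafilter A, a ∈ u.carrier := by
  obtain ⟨u, hu⟩ := exists_ultrafilter_superset {b | a ≤ b} le_top
    (by simpa [le_bot_iff] using ha)
    (fun x y hx hxy => le_trans hx hxy)
    (fun x y hx hy => le_inf hx hy)
  exact ⟨u, hu (le_refl a)⟩

end BAUltrafilterAux

open BAUltrafilterAux in
theorem stmt_0 {A : Type*} [BooleanAlgebra A] (d : A → A)
    (hd0 : d ⊥ = ⊥) (hdsup : ∀ a b : A, d (a ⊔ b) = d a ⊔ d b)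
    (R : BAUltrafilter A → BAUltrafilter A → Prop)
    (hR : ∀ x y, R x y ↔ ∀ a : A, a ∈ y.carrier → d a ∈ x.carrier)
    (φ : A → Set (BAUltrafilter A))
    (hφ : ∀ a, φ a = {x | a ∈ x.carrier}) :
    Function.Injective φ ∧
    (∀ a b : A, φ (a ⊓ b) = φ a ∩ φ b) ∧
    (∀ a b : A, φ (a ⊔ b) = φ a ∪ φ b) ∧
    (∀ a : A, φ aᶜ = (φ a)ᶜ) ∧
    φ ⊤ = Set.univ ∧ φ ⊥ = ∅ ∧
    (∀ a : A, φ (d a) = {x | ∃ y ∈ φ a, R x y}) := by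
  have hdmono : ∀ a b : A, a ≤ b → d a ≤ d b := by
    intro a b hab
    have : d b = d a ⊔ d b := by
      rw [← hdsup]; rw [sup_eq_right.2 hab]
    rw [this]; exact le_sup_left
  -- key separation lemma
  have hsep : ∀ a b : A, ¬ a ≤ b → ∃ u : BAUltrafilter A,
      a ∈ u.carrier ∧ b ∉ u.carrier := by
    intro a b hab
    have hne : a ⊓ bᶜ ≠ ⊥ := by
      intro h
      apply hab
      rw [← sdiff_eq] at h
      exact sdiff_eq_bot_iff.1 h
    obtain ⟨u, hu⟩ := exists_ultrafilter_mem hne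
    refine ⟨u, u.mem_of_le _ _ hu inf_le_left, ?_⟩
    intro hb
    have hbc := u.mem_of_le _ _ hu inf_le_right
    exact not_both u b ⟨hb, hbc⟩
  refine ⟨?_, ?_, ?_, ?_, ?_, ?_, ?_⟩
  · -- injective
    intro a b hab
    by_contra hne
    rw [hφ, hφ, Set.ext_iff] at hab
    simp only [Set.mem_setOf_eq] at hab
    have hor : ¬ a ≤ b ∨ ¬ b ≤ a := by
      by_contra h
      push_neg at h
      exact hne (le_antisymm h.1 h.2)
    rcases hor with h | h
    · obtain ⟨u, h1, h2⟩ := hsep a b h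
      exact h2 ((hab u).1 h1)
    · obtain ⟨u, h1, h2⟩ := hsep b a h
      exact h2 ((hab u).2 h1)
  · intro a b
    rw [hφ, hφ, hφ]
    ext u
    simp only [Set.mem_setOf_eq, Set.mem_inter_iff]
    constructor
    · intro h
      exact ⟨u.mem_of_le _ _ h inf_le_left, u.mem_of_le _ _ h inf_le_right⟩
    · rintro ⟨h1, h2⟩; exact u.inf_mem _ _ h1 h2
  · intro a b
    rw [hφ, hφ, hφ]
    ext u
    simp only [Set.mem_setOf_eq, Set.mem_union]
    constructor
    · intro h
      by_contra hc
      push_neg at hc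
      have h1 : aᶜ ∈ u.carrier := (compl_mem_iff u a).2 hc.1
      have h2 : bᶜ ∈ u.carrier := (compl_mem_iff u b).2 hc.2
      have := u.inf_mem _ _ h1 h2
      rw [← compl_sup] at this
      exact not_both u (a ⊔ b) ⟨h, this⟩
    · rintro (h | h)
      · exact u.mem_of_le _ _ h le_sup_left
      · exact u.mem_of_le _ _ h le_sup_right
  · intro a
    rw [hφ, hφ]
    ext u
    simp only [Set.mem_setOf_eq, Set.mem_compl_iff]
    exact compl_mem_iff u a
  · rw [hφ]; ext u; simp [u.top_mem]
  · rw [hφ]; ext u; simp [u.bot_not_mem]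
  · intro a
    ext x
    rw [hφ, hφ]
    simp only [Set.mem_setOf_eq]
    constructor
    · -- the hard direction
      intro hda
      set s : Set A := {b | ∃ c : A, (d cᶜ)ᶜ ∈ x.carrier ∧ a ⊓ c ≤ b} with hs
      have htop : ⊤ ∈ s := by
        refine ⟨⊤, ?_, le_top⟩
        have : (⊤ : A)ᶜ = ⊥ := compl_top
        rw [this, hd0, compl_bot]
        exact x.top_mem
      have hbot : ⊥ ∉ s := by
        rintro ⟨c, hc, hle⟩
        have hac : a ≤ cᶜ := le_compl_iff_disjoint_right.2 (disjoint_iff.2 (le_bot_iff.1 hle))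
        have : d a ≤ d cᶜ := hdmono _ _ hac
        have hdc : d cᶜ ∈ x.carrier := x.mem_of_le _ _ hda this
        exact not_both x (d cᶜ) ⟨hdc, hc⟩
      have hup : ∀ p q : A, p ∈ s → p ≤ q → q ∈ s := by
        rintro p q ⟨c, hc, hle⟩ hpq
        exact ⟨c, hc, le_trans hle hpq⟩
      have hinf : ∀ p q : A, p ∈ s → q ∈ s → p ⊓ q ∈ s := by
        rintro p q ⟨c1, hc1, hle1⟩ ⟨c2, hc2, hle2⟩
        refine ⟨c1 ⊓ c2, ?_, ?_⟩
        · have : (c1 ⊓ c2)ᶜ = c1ᶜ ⊔ c2ᶜ := compl_inf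
          rw [this, hdsup, compl_sup]
          exact x.inf_mem _ _ hc1 hc2
        · exact le_inf (le_trans (inf_le_inf_left a inf_le_left) hle1)
            (le_trans (inf_le_inf_left a inf_le_right) hle2)
      obtain ⟨y, hy⟩ := exists_ultrafilter_superset s htop hbot hup hinf
      have hay : a ∈ y.carrier := by
        apply hy
        refine ⟨⊤, ?_, by simp⟩
        rw [compl_top, hd0, compl_bot]
        exact x.top_mem
      refine ⟨y, hay, ?_⟩
      rw [hR]
      intro b hb
      by_contra hdb
      have hdbc : (d b)ᶜ ∈ x.carrier := (compl_mem_iff x (d b)).2 hdb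
      have : bᶜ ∈ s := by
        refine ⟨bᶜ, ?_, inf_le_right⟩
        rw [compl_compl]
        exact hdbc
      exact not_both y b ⟨hb, hy this⟩
    · rintro ⟨y, hy, hxy⟩
      exact (hR x y).1 hxy a hy
end

section
/- On the frame with domain ℕ ∪ {∞}, relation R given by (n+1) R n for all n ∈ ℕ and ∞ R ∞, with admissible sets ℱ consisting of all finite subsets of ℕ together with all cofinite subsets of ℕ ∪ {∞} containing ∞: the least pre-fixed point of the map S ↦ {0} ∪ ◇_R(S) over all subsets of the domain is ℕ, whereas the intersection of all pre-fixed points of this map lying in ℱ is ℕ ∪ {∞}. -/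
/-- The frame ℕ ∪ {∞}, with `none` playing the role of ∞. -/
theorem stmt_4
    (R : Option ℕ → Option ℕ → Prop)
    (hR : ∀ a b, R a b ↔ ((∃ n : ℕ, a = some (n + 1) ∧ b = some n) ∨ (a = none ∧ b = none)))
    (dia : Set (Option ℕ) → Set (Option ℕ))
    (hdia : ∀ S, dia S = {x | ∃ y ∈ S, R x y})
    (F : Set (Option ℕ) → Set (Option ℕ))
    (hF : ∀ S, F S = {some 0} ∪ dia S)
    (ℱ : Set (Set (Option ℕ)))
    (hℱ : ℱ = {S | (S.Finite ∧ none ∉ S) ∨ (Sᶜ.Finite ∧ none ∈ S)}) :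
    ⋂₀ {S | F S ⊆ S} = {x | ∃ n : ℕ, x = some n} ∧
    ⋂₀ {S | S ∈ ℱ ∧ F S ⊆ S} = Set.univ := by
  -- any pre-fixed point contains all naturals
  have key : ∀ S : Set (Option ℕ), F S ⊆ S → ∀ n : ℕ, some n ∈ S := by
    intro S hS n
    induction n with
    | zero =>
      apply hS
      rw [hF]; left; rfl
    | succ k ih =>
      apply hS
      rw [hF]; right
      rw [hdia]
      exact ⟨some k, ih, (hR _ _).2 (Or.inl ⟨k, rfl, rfl⟩)⟩
  constructor
  · apply Set.Subset.antisymm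
    · intro x hx
      have hN : F {x | ∃ n : ℕ, x = some n} ⊆ {x | ∃ n : ℕ, x = some n} := by
        rw [hF, hdia]
        rintro z (hz | ⟨y, hy, hr⟩)
        · exact ⟨0, hz⟩
        · rcases (hR _ _).1 hr with ⟨n, hz, hyn⟩ | ⟨hz, hyn⟩
          · exact ⟨n + 1, hz⟩
          · rcases hy with ⟨m, hm⟩; rw [hyn] at hm; exact absurd hm (by simp)
      exact hx _ hN
    · rintro x ⟨n, rfl⟩ S hS
      exact key S hS n
  · rw [Set.eq_univ_iff_forall]
    intro x
    intro S hS
    rcases hS with ⟨hSℱ, hSF⟩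
    rw [hℱ] at hSℱ
    have hall : ∀ n : ℕ, some n ∈ S := key S hSF
    rcases hSℱ with ⟨hfin, _⟩ | ⟨_, hnone⟩
    · exfalso
      have : Set.range (some : ℕ → Option ℕ) ⊆ S := by
        rintro _ ⟨n, rfl⟩; exact hall n
      have : (Set.range (some : ℕ → Option ℕ)).Finite := hfin.subset this
      exact Set.infinite_range_of_injective (Option.some_injective ℕ) this
    · cases x with
      | none => exact hnone
      | some n => exact hall n
end
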